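/- For the additive channel Y = X₁ ⊕ … ⊕ X_c ⊕ N over F_q with N independent of the inputs, when all messages M₁, …, M_c are independent and uniform on F_q^k and each sender transmits its message encoded by the same linear code, the receiver's observation is independent of (M₁, …, M_{c-1}) given the modulo sum M₁ + … + M_c. -/
import Mathlib


open scoped BigOperators

/-- Shannon entropy of a pmf on a finite type (natural log). -/
noncomputable def ent {α : Type*} [Fintype α] (p : α → ℝ) : ℝ :=
  -∑ a, p a * Real.log (p a)

/-- Conditional mutual information `I(X;Y|Z)` of a joint pmf on `α × β × γ`. -/
noncomputable def condMI {α β γ : Type*} [Fintype α] [Fintype β] [Fintype γ]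
    (p : α × β × γ → ℝ) : ℝ :=
  ent (fun ac : α × γ => ∑ b, p (ac.1, b, ac.2))
  + ent (fun bc : β × γ => ∑ a, p (a, bc.1, bc.2))
  - ent (fun c : γ => ∑ a, ∑ b, p (a, b, c))
  - ent p

/-- For the additive channel `Y = X₁ ⊕ ⋯ ⊕ X_c ⊕ N` over `F_q^n`, with all messages
`M₁,…,M_c` independent uniform on `F_q^k`, each encoded by the same injective linear code
`G`, the receiver's observation is conditionally independent of `(M₁,…,M_{c-1})` given the
modulo sum `∑ᵢ Mᵢ`: the conditional mutual information `I(Y; M₁,…,M_{c-1} | ∑ᵢ Mᵢ)` of the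
induced joint distribution is `0`. -/
theorem additive_channel_security
    {F : Type*} [Field F] [Fintype F] (k n c : ℕ) (hc : 0 < c)
    (G : (Fin k → F) →ₗ[F] (Fin n → F)) (hG : Function.Injective G)
    (ν : (Fin n → F) → ℝ) (hν0 : ∀ z, 0 ≤ ν z) (hν1 : ∑ z, ν z = 1) :
    condMI (fun yvs : (Fin n → F) × (Fin (c - 1) → (Fin k → F)) × (Fin k → F) =>
        ((Fintype.card (Fin k → F) : ℝ) ^ c)⁻¹ * ν (yvs.1 - G yvs.2.2))
      = 0 := by
  classical
  set Q : ℝ := (Fintype.card (Fin k → F) : ℝ) with hQdef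
  have hQ : 0 < Q := by
    rw [hQdef]
    exact_mod_cast Fintype.card_pos (α := Fin k → F)
  have hQne : Q ≠ 0 := ne_of_gt hQ
  have hcardV : (Fintype.card (Fin (c - 1) → (Fin k → F)) : ℝ) = Q ^ (c - 1) := by
    rw [Fintype.card_fun]
    push_cast
    simp [hQdef]
  have hpow : Q ^ (c - 1) * Q = Q ^ c := by
    rw [← pow_succ]
    congr 1
    omega
  have hQcQ : Q ^ (c - 1) * (Q ^ c)⁻¹ = Q⁻¹ := by
    rw [← hpow, mul_inv, ← mul_assoc, mul_inv_cancel₀ (pow_ne_zero _ hQne), one_mul]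
  have hQcne : (Q ^ c : ℝ) ≠ 0 := pow_ne_zero _ hQne
  have key : ∀ s : Fin k → F, ∑ y, ν (y - G s) = 1 := by
    intro s
    rw [← hν1]
    exact Fintype.sum_equiv (Equiv.subRight (G s)) _ _ (fun y => rfl)
  have mullog : ∀ (a b : ℝ), 0 ≤ b → a ≠ 0 →
      b * Real.log (a * b) = b * Real.log a + b * Real.log b := by
    intro a b hb ha
    rcases eq_or_lt_of_le hb with h | h
    · simp [← h]
    · rw [Real.log_mul ha (ne_of_gt h), mul_add]
  set T : ℝ := ∑ s : Fin k → F, ∑ y : Fin n → F,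
      ν (y - G s) * Real.log (ν (y - G s)) with hT
  have hsum2 : ∑ s : Fin k → F, ∑ y : Fin n → F, ν (y - G s) = Q := by
    simp [key, hQdef, Finset.card_univ]
  -- A : (y,s)-marginal entropy
  have hA : ent (fun ac : (Fin n → F) × (Fin k → F) =>
      ∑ b : Fin (c - 1) → (Fin k → F), (Q ^ c)⁻¹ * ν (ac.1 - G ac.2))
      = -Real.log Q⁻¹ - Q⁻¹ * T := by
    have hfun : ∀ ac : (Fin n → F) × (Fin k → F),
        (∑ _b : Fin (c - 1) → (Fin k → F), (Q ^ c)⁻¹ * ν (ac.1 - G ac.2))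
        = Q⁻¹ * ν (ac.1 - G ac.2) := by
      intro ac
      rw [Finset.sum_const, Finset.card_univ, nsmul_eq_mul, hcardV, ← mul_assoc, hQcQ]
    unfold ent
    rw [Fintype.sum_prod_type]
    calc -∑ y, ∑ s, (∑ _b : Fin (c - 1) → (Fin k → F), (Q ^ c)⁻¹ * ν (y - G s)) *
            Real.log (∑ _b : Fin (c - 1) → (Fin k → F), (Q ^ c)⁻¹ * ν (y - G s))
        = -∑ y, ∑ s, (Q⁻¹ * Real.log Q⁻¹ * ν (y - G s)
            + Q⁻¹ * (ν (y - G s) * Real.log (ν (y - G s)))) := by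
          congr 1
          refine Finset.sum_congr rfl fun y _ => Finset.sum_congr rfl fun s _ => ?_
          rw [hfun (y, s)]
          have := mullog Q⁻¹ (ν (y - G s)) (hν0 _) (inv_ne_zero hQne)
          rw [mul_assoc, this]
          ring
      _ = -Real.log Q⁻¹ - Q⁻¹ * T := by
          rw [Finset.sum_comm]
          simp only [Finset.sum_add_distrib, ← Finset.mul_sum]
          rw [hsum2, hT]
          field_simp
          ring
  -- B : (v,s)-marginal entropy
  have hB : ent (fun bc : (Fin (c - 1) → (Fin k → F)) × (Fin k → F) =>
      ∑ y : Fin n → F, (Q ^ c)⁻¹ * ν (y - G bc.2))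
      = -Real.log ((Q ^ c)⁻¹) := by
    have hfun : ∀ bc : (Fin (c - 1) → (Fin k → F)) × (Fin k → F),
        (∑ y : Fin n → F, (Q ^ c)⁻¹ * ν (y - G bc.2)) = (Q ^ c)⁻¹ := by
      intro bc
      rw [← Finset.mul_sum, key, mul_one]
    unfold ent
    simp only [hfun]
    rw [Finset.sum_const, Finset.card_univ, nsmul_eq_mul]
    push_cast [Fintype.card_prod]
    rw [hcardV, ← hQdef, hpow, ← mul_assoc, mul_inv_cancel₀ hQcne, one_mul]
  -- C : s-marginal entropy
  have hC : ent (fun s : Fin k → F =>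
      ∑ y : Fin n → F, ∑ b : Fin (c - 1) → (Fin k → F), (Q ^ c)⁻¹ * ν (y - G s))
      = -Real.log Q⁻¹ := by
    have hfun : ∀ s : Fin k → F,
        (∑ y : Fin n → F, ∑ _b : Fin (c - 1) → (Fin k → F), (Q ^ c)⁻¹ * ν (y - G s))
        = Q⁻¹ := by
      intro s
      have : ∀ y : Fin n → F,
          (∑ _b : Fin (c - 1) → (Fin k → F), (Q ^ c)⁻¹ * ν (y - G s))
          = Q⁻¹ * ν (y - G s) := by
        intro y
        rw [Finset.sum_const, Finset.card_univ, nsmul_eq_mul, hcardV, ← mul_assoc, hQcQ]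
      simp only [this]
      rw [← Finset.mul_sum, key, mul_one]
    unfold ent
    simp only [hfun]
    rw [Finset.sum_const, Finset.card_univ, nsmul_eq_mul, ← hQdef, ← mul_assoc,
      mul_inv_cancel₀ hQne, one_mul]
  -- D : joint entropy
  have hD : ent (fun yvs : (Fin n → F) × (Fin (c - 1) → (Fin k → F)) × (Fin k → F) =>
      (Q ^ c)⁻¹ * ν (yvs.1 - G yvs.2.2))
      = -Real.log ((Q ^ c)⁻¹) - Q⁻¹ * T := by
    unfold ent
    rw [Fintype.sum_prod_type]
    simp only [Fintype.sum_prod_type]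
    calc -∑ y, ∑ _b : Fin (c - 1) → (Fin k → F), ∑ s,
            ((Q ^ c)⁻¹ * ν (y - G s)) * Real.log ((Q ^ c)⁻¹ * ν (y - G s))
        = -∑ y, ∑ _b : Fin (c - 1) → (Fin k → F), ∑ s,
            ((Q ^ c)⁻¹ * Real.log ((Q ^ c)⁻¹) * ν (y - G s)
            + (Q ^ c)⁻¹ * (ν (y - G s) * Real.log (ν (y - G s)))) := by
          congr 1
          refine Finset.sum_congr rfl fun y _ => Finset.sum_congr rfl fun b _ =>
            Finset.sum_congr rfl fun s _ => ?_
          have := mullog ((Q ^ c)⁻¹) (ν (y - G s)) (hν0 _) (inv_ne_zero hQcne)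
          rw [mul_assoc, this]
          ring
      _ = -Real.log ((Q ^ c)⁻¹) - Q⁻¹ * T := by
          have hb : ∀ y : Fin n → F,
              (∑ _b : Fin (c - 1) → (Fin k → F), ∑ s,
                ((Q ^ c)⁻¹ * Real.log ((Q ^ c)⁻¹) * ν (y - G s)
                + (Q ^ c)⁻¹ * (ν (y - G s) * Real.log (ν (y - G s)))))
              = Q ^ (c - 1) * ∑ s,
                ((Q ^ c)⁻¹ * Real.log ((Q ^ c)⁻¹) * ν (y - G s)
                + (Q ^ c)⁻¹ * (ν (y - G s) * Real.log (ν (y - G s)))) := by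
            intro y
            rw [Finset.sum_const, Finset.card_univ, nsmul_eq_mul, hcardV]
          simp only [hb, ← Finset.mul_sum]
          rw [Finset.sum_comm]
          simp only [Finset.sum_add_distrib, ← Finset.mul_sum]
          rw [hsum2, hT]
          linear_combination
            (-(Real.log ((Q ^ c)⁻¹) * Q) - ∑ s : Fin k → F, ∑ y : Fin n → F,
              ν (y - G s) * Real.log (ν (y - G s))) * hQcQ
            - Real.log ((Q ^ c)⁻¹) * mul_inv_cancel₀ hQne
  simp only [condMI]
  rw [hA, hB, hC, hD]
  ring
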